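/- (Leading logarithmic term of I_0 at the figure-eight.) As h → 0⁺ one has (I_0(h) − 4/3) / (h·ln h) → −1. -/

import Mathlib

open Real Set Filter intervalIntegral

/-- Right endpoint of the exterior oval: `x_max(h) = √(1 + √(1+4h))`. -/
noncomputable def xmax (h : ℝ) : ℝ := Real.sqrt (1 + Real.sqrt (1 + 4*h))

/-- Complete elliptic integral `I_i(h) = ∫_{-x_max}^{x_max} x^i √(2h + x² - x⁴/2) dx`. -/
noncomputable def ellI (i : ℕ) (h : ℝ) : ℝ :=
  ∫ x in (-xmax h)..(xmax h), x^i * Real.sqrt (2*h + x^2 - x^4/2)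

/-- Complete elliptic integral `I'_i(h) = ∫_{-x_max}^{x_max} x^i (2h + x² - x⁴/2)^{-1/2} dx`. -/
noncomputable def ellI' (i : ℕ) (h : ℝ) : ℝ :=
  ∫ x in (-xmax h)..(xmax h), x^i / Real.sqrt (2*h + x^2 - x^4/2)

section aux

lemma auxL1 {b : ℝ} (hb : 0 ≤ b) :
    ∫ x in (0:ℝ)..b, x * Real.sqrt (b^2 - x^2) = b^3 / 3 := by
  have key := integral_eq_sub_of_hasDeriv_right_of_le
    (f := fun x : ℝ => -(1/3) * ((b^2 - x^2) * Real.sqrt (b^2 - x^2)))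
    (f' := fun x : ℝ => x * Real.sqrt (b^2 - x^2)) hb
    (by fun_prop)
    (by
      intro x hx
      have hpos : 0 < b^2 - x^2 := by nlinarith [hx.1, hx.2]
      have h1 : HasDerivAt (fun x : ℝ => b^2 - x^2) (-(2*x)) x := by
        simpa using ((hasDerivAt_pow 2 x).const_sub (b^2))
      have h2 : HasDerivAt (fun x : ℝ => Real.sqrt (b^2 - x^2))
          (1 / (2 * Real.sqrt (b^2 - x^2)) * (-(2*x))) x :=
        (Real.hasDerivAt_sqrt hpos.ne').comp x h1
      have h3 : HasDerivAt (fun x : ℝ => (b^2 - x^2) * Real.sqrt (b^2 - x^2))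
          ((-(2*x)) * Real.sqrt (b^2 - x^2)
            + (b^2 - x^2) * (1 / (2 * Real.sqrt (b^2 - x^2)) * (-(2*x)))) x :=
        h1.mul h2
      have h4 := (h3.const_mul (-(1/3) : ℝ))
      have hs : Real.sqrt (b^2 - x^2) > 0 := Real.sqrt_pos.2 hpos
      have hq : Real.sqrt (b^2 - x^2) * Real.sqrt (b^2 - x^2) = b^2 - x^2 :=
        Real.mul_self_sqrt hpos.le
      have heq : -(1/3) * ((-(2*x)) * Real.sqrt (b^2 - x^2)
            + (b^2 - x^2) * (1 / (2 * Real.sqrt (b^2 - x^2)) * (-(2*x))))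
          = x * Real.sqrt (b^2 - x^2) := by
        field_simp
        linear_combination (-x) * hq
      rw [heq] at h4
      exact h4.hasDerivWithinAt)
    (by apply Continuous.intervalIntegrable; fun_prop)
  rw [key]
  have h1 : Real.sqrt (b^2 - 0^2) = b := by simpa using Real.sqrt_sq hb
  simp only [sub_self, Real.sqrt_zero, h1]
  ring

lemma auxL2 {b c : ℝ} (hc : 0 < c) :
    ∫ x in (0:ℝ)..b, (Real.sqrt (x^2 + c^2) - x)
      = (b * Real.sqrt (b^2 + c^2) - b^2
          + c^2 * (Real.log (b + Real.sqrt (b^2 + c^2)) - Real.log c)) / 2 := by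
  have key := integral_eq_sub_of_hasDerivAt
    (f := fun x : ℝ => (x * Real.sqrt (x^2 + c^2)
        + c^2 * Real.log (x + Real.sqrt (x^2 + c^2)) - x^2) / 2)
    (f' := fun x : ℝ => Real.sqrt (x^2 + c^2) - x)
    (a := 0) (b := b)
    (by
      intro x _
      have hpos : 0 < x^2 + c^2 := by positivity
      have hs : 0 < Real.sqrt (x^2 + c^2) := Real.sqrt_pos.2 hpos
      have hsx : 0 < x + Real.sqrt (x^2 + c^2) := by
        rcases le_or_gt 0 x with hx | hx
        · positivity
        · have : -x < Real.sqrt (x^2 + c^2) := by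
            rw [show x^2 = (-x)^2 by ring] at hpos ⊢
            have := Real.sqrt_lt_sqrt (by positivity) (by nlinarith : (-x)^2 < (-x)^2 + c^2)
            rwa [Real.sqrt_sq (by linarith)] at this
          linarith
      have hq : Real.sqrt (x^2 + c^2) * Real.sqrt (x^2 + c^2) = x^2 + c^2 :=
        Real.mul_self_sqrt hpos.le
      have h1 : HasDerivAt (fun x : ℝ => x^2 + c^2) (2*x) x := by
        simpa using ((hasDerivAt_pow 2 x).add_const (c^2))
      have h2 : HasDerivAt (fun x : ℝ => Real.sqrt (x^2 + c^2))
          (1 / (2 * Real.sqrt (x^2 + c^2)) * (2*x)) x :=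
        (Real.hasDerivAt_sqrt hpos.ne').comp x h1
      have h3 : HasDerivAt (fun x : ℝ => x * Real.sqrt (x^2 + c^2))
          (1 * Real.sqrt (x^2 + c^2) + x * (1 / (2 * Real.sqrt (x^2 + c^2)) * (2*x))) x :=
        (hasDerivAt_id x).mul h2
      have h4 : HasDerivAt (fun x : ℝ => x + Real.sqrt (x^2 + c^2))
          (1 + 1 / (2 * Real.sqrt (x^2 + c^2)) * (2*x)) x :=
        (hasDerivAt_id x).add h2
      have h5 : HasDerivAt (fun x : ℝ => Real.log (x + Real.sqrt (x^2 + c^2)))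
          ((1 + 1 / (2 * Real.sqrt (x^2 + c^2)) * (2*x)) / (x + Real.sqrt (x^2 + c^2))) x :=
        h4.log hsx.ne'
      have hx2 : HasDerivAt (fun x : ℝ => x^2) (2*x) x := by
        simpa using hasDerivAt_pow 2 x
      have h6 := ((h3.add (h5.const_mul (c^2))).sub hx2).div_const 2
      have heq : (1 * Real.sqrt (x^2 + c^2) + x * (1 / (2 * Real.sqrt (x^2 + c^2)) * (2*x))
          + c^2 * ((1 + 1 / (2 * Real.sqrt (x^2 + c^2)) * (2*x)) / (x + Real.sqrt (x^2 + c^2)))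
          - 2 * x) / 2 = Real.sqrt (x^2 + c^2) - x := by
        have hsx' : x + Real.sqrt (x^2 + c^2) ≠ 0 := hsx.ne'
        field_simp
        linear_combination (-Real.sqrt (x^2+c^2) - x) * hq
      rw [heq] at h6
      exact h6
      )
    (by apply Continuous.intervalIntegrable; fun_prop)
  rw [key]
  have h0 : Real.sqrt (0^2 + c^2) = c := by
    rw [show (0:ℝ)^2 + c^2 = c^2 by ring, Real.sqrt_sq hc.le]
  simp only [h0, zero_add, zero_mul, ne_eq]
  ring


section helpers

lemma sqrt_xc_ge {c : ℝ} (x : ℝ) : x ≤ Real.sqrt (x^2 + c^2) := by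
  rcases le_or_gt x 0 with hx | hx
  · exact le_trans hx (Real.sqrt_nonneg _)
  · have h1 : Real.sqrt (x^2) ≤ Real.sqrt (x^2 + c^2) :=
      Real.sqrt_le_sqrt (by linarith only [sq_nonneg c])
    rwa [Real.sqrt_sq hx.le] at h1

lemma sqrt_b_le {b x : ℝ} (hb : 0 < b) (hx : 0 ≤ x) : Real.sqrt (b^2 - x^2) ≤ b := by
  have h1 : Real.sqrt (b^2 - x^2) ≤ Real.sqrt (b^2) :=
    Real.sqrt_le_sqrt (by nlinarith)
  rwa [Real.sqrt_sq hb.le] at h1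

lemma myRub {b c : ℝ} (hb : 0 < b) (hc : 0 < c) :
    (∫ x in (0:ℝ)..b, (Real.sqrt (x^2 + c^2) - x) * Real.sqrt (b^2 - x^2))
      ≤ b * ∫ x in (0:ℝ)..b, (Real.sqrt (x^2 + c^2) - x) := by
  have mono : (∫ x in (0:ℝ)..b, (Real.sqrt (x^2 + c^2) - x) * Real.sqrt (b^2 - x^2))
      ≤ ∫ x in (0:ℝ)..b, b * (Real.sqrt (x^2 + c^2) - x) := by
    apply intervalIntegral.integral_mono_on hb.le
      (by apply Continuous.intervalIntegrable; fun_prop)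
      (by apply Continuous.intervalIntegrable; fun_prop)
    intro x hx
    have h1 := sqrt_b_le hb hx.1
    have h2 : 0 ≤ Real.sqrt (x^2 + c^2) - x := by linarith [sqrt_xc_ge (c := c) x]
    have h3 : 0 ≤ Real.sqrt (b^2 - x^2) := Real.sqrt_nonneg _
    nlinarith
  rwa [intervalIntegral.integral_const_mul] at mono

lemma myRlb {b c : ℝ} (hb : 0 < b) (hc : 0 < c) :
    b * (∫ x in (0:ℝ)..b, (Real.sqrt (x^2 + c^2) - x)) - c^2 * b / 4
      ≤ ∫ x in (0:ℝ)..b, (Real.sqrt (x^2 + c^2) - x) * Real.sqrt (b^2 - x^2) := by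
  have mono : ∫ x in (0:ℝ)..b,
      (b * (Real.sqrt (x^2 + c^2) - x) - c^2/(2*b) * x)
      ≤ ∫ x in (0:ℝ)..b, (Real.sqrt (x^2 + c^2) - x) * Real.sqrt (b^2 - x^2) := by
    apply intervalIntegral.integral_mono_on hb.le
      (by apply Continuous.intervalIntegrable; fun_prop)
      (by apply Continuous.intervalIntegrable; fun_prop)
    intro x hx
    have hx0 : 0 ≤ x := hx.1
    have hxb : x ≤ b := hx.2
    set u : ℝ := Real.sqrt (x^2 + c^2) with hu
    have hu2 : u^2 = x^2 + c^2 := Real.sq_sqrt (by positivity)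
    have hux : x ≤ u := sqrt_xc_ge x
    set v : ℝ := Real.sqrt (b^2 - x^2) with hv
    have hv2 : v^2 = b^2 - x^2 := Real.sq_sqrt (by nlinarith)
    have hvb : v ≤ b := sqrt_b_le hb hx0
    have hvn : 0 ≤ v := Real.sqrt_nonneg _
    have f1 : b^2 - x^2 ≤ v * b := by nlinarith
    have f2 : (u - x) * (2*x) ≤ c^2 := by nlinarith
    have f3 : 0 ≤ u - x := by linarith
    have goal2 : (b * (u - x) - c^2/(2*b) * x) * b ≤ ((u-x) * v) * b := by
      have e1 : c^2/(2*b)*x*b = c^2*x/2 := by field_simp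
      nlinarith [mul_le_mul_of_nonneg_left f1 f3, mul_le_mul_of_nonneg_right f2 hx0,
        mul_le_mul_of_nonneg_right (mul_le_mul_of_nonneg_left hvb f3) hb.le]
    have := le_of_mul_le_mul_right goal2 hb
    linarith
  have comp : ∫ x in (0:ℝ)..b,
      (b * (Real.sqrt (x^2 + c^2) - x) - c^2/(2*b) * x)
      = b * (∫ x in (0:ℝ)..b, (Real.sqrt (x^2 + c^2) - x)) - c^2 * b / 4 := by
    rw [intervalIntegral.integral_sub (by apply Continuous.intervalIntegrable; fun_prop)
      (by apply Continuous.intervalIntegrable; fun_prop),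
      intervalIntegral.integral_const_mul, intervalIntegral.integral_const_mul,
      integral_id]
    field_simp
    ring
  linarith [mono, comp.ge, comp.le]

end helpers

lemma le_of_sq_le' {x y : ℝ} (hx : 0 ≤ x) (hy : 0 ≤ y) (h : x^2 ≤ y^2) : x ≤ y := by
  nlinarith

lemma cube_bound {h : ℝ} (h0 : 0 ≤ h) (h14 : h ≤ 1/4) : (2+2*h)^3 ≤ 8*(1+3*h)^2 := by
  nlinarith [sq_nonneg h, mul_nonneg h0 h0]

lemma logL_bounds {h c q : ℝ} (h0 : 0 < h) (h14 : h ≤ 1/4)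
    (hcpos : 0 < c) (hc2lb : h ≤ c^2) (hc2ub : c^2 ≤ 2*h)
    (hq1 : 2 ≤ q) (hq2 : q ≤ 5) :
    (-Real.log h)/2 ≤ Real.log q - Real.log c
      ∧ Real.log q - Real.log c ≤ (-Real.log h)/2 + 2 := by
  have hlogc_ub : Real.log c ≤ (Real.log 2 + Real.log h) / 2 := by
    have h1 : Real.log (c^2) ≤ Real.log (2*h) := Real.log_le_log (by positivity) hc2ub
    rw [Real.log_pow, Real.log_mul (by norm_num) h0.ne'] at h1
    push_cast at h1
    linarith
  have hlogc_lb : Real.log h / 2 ≤ Real.log c := by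
    have h1 : Real.log h ≤ Real.log (c^2) := Real.log_le_log h0 hc2lb
    rw [Real.log_pow] at h1
    push_cast at h1
    linarith
  have hlog2 : (0:ℝ) < Real.log 2 := Real.log_pos (by norm_num)
  have hlog2ub : Real.log 2 ≤ 1 := by
    have := Real.log_le_sub_one_of_pos (by norm_num : (0:ℝ) < 2)
    linarith
  have hlog5 : Real.log 5 < 2 := by
    have he : (5:ℝ) < Real.exp 2 := by
      have h1 := Real.exp_one_gt_d9
      have h2 : Real.exp 2 = Real.exp 1 * Real.exp 1 := by
        rw [show (2:ℝ) = 1 + 1 by norm_num, Real.exp_add]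
      nlinarith
    have := Real.log_lt_log (by norm_num : (0:ℝ) < 5) he
    rwa [Real.log_exp] at this
  constructor
  · have h1 : Real.log 2 ≤ Real.log q := Real.log_le_log (by norm_num) hq1
    linarith
  · have h1 : Real.log q ≤ Real.log 5 := Real.log_le_log (by linarith) hq2
    linarith

set_option maxHeartbeats 1000000 in
lemma arith_all {h s b c G L R W r2 t : ℝ}
    (h0 : 0 < h) (h14 : h ≤ 1/4)
    (hs2 : s^2 = 1+4*h) (hs1 : 1 < s) (hsub : s ≤ 1+2*h) (hslb : 1+2*h-2*h^2 ≤ s)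
    (hb2 : b^2 = 1+s) (hbpos : 0 < b)
    (hc2 : c^2 = s-1) (hcpos : 0 < c)
    (hr2 : r2^2 = 2) (hr2pos : 0 < r2)
    (hG2 : G^2 = b^2+c^2) (hGb : b ≤ G)
    (hWval : W = (b*G - b^2 + c^2*L)/2)
    (hRub : R ≤ b*W) (hRlb : b*W - c^2*b/4 ≤ R)
    (hLlb : t/2 ≤ L) (hLub : L ≤ t/2+2) (htpos : 0 < t) (hth : t*h ≤ 1) :
    |r2*(b^3/3+R) - 4/3 - h*t| ≤ 12*h := by
  have hc2ub : c^2 ≤ 2*h := by rw [hc2]; linarith only [hsub]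
  have hc2lb : 2*h - 2*h^2 ≤ c^2 := by rw [hc2]; linarith only [hslb]
  have hbub : b ≤ 8/5 :=
    le_of_sq_le' hbpos.le (by norm_num)
      (by rw [hb2]; linarith only [hsub, h14])
  have hr2ub : r2 ≤ 3/2 := le_of_sq_le' hr2pos.le (by norm_num) (by rw [hr2]; norm_num)
  have hblb : r2 ≤ b := le_of_sq_le' hr2pos.le hbpos.le (by rw [hr2, hb2]; linarith only [hs1])
  have hLpos : 0 < L := by linarith only [hLlb, htpos]
  have hbG1 : 0 ≤ b * G - b^2 := by
    have e : b*G - b^2 = b*(G-b) := by ring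
    rw [e]
    exact mul_nonneg hbpos.le (by linarith only [hGb])
  have hbG2 : b * G - b^2 ≤ c^2 / 2 := by
    linarith only [sq_nonneg (G - b), hG2]
  have hb3lb : 4 ≤ r2 * b^3 := by
    have p : r2^3 ≤ b^3 := pow_le_pow_left₀ hr2pos.le hblb 3
    have q := mul_le_mul_of_nonneg_left p hr2pos.le
    have e : r2 * r2^3 = 4 := by
      rw [show r2 * r2^3 = (r2^2)^2 by ring, hr2]; norm_num
    linarith only [q, e]
  have hb3ub : r2 * b^3 ≤ 4 + 12*h := by
    have hbb : b^2 ≤ 2 + 2*h := by linarith only [hb2, hsub]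
    have h2 : (b^2)^3 ≤ (2+2*h)^3 := pow_le_pow_left₀ (sq_nonneg b) hbb 3
    have h3 := cube_bound h0.le h14
    have hb6 : (b^3)^2 ≤ (2 * r2 * (1+3*h))^2 := by
      have e : (2 * r2 * (1+3*h))^2 = 4 * r2^2 * (1+3*h)^2 := by ring
      rw [e, hr2, show (b^3)^2 = (b^2)^3 by ring]
      linarith only [h2, h3]
    have h5 : b^3 ≤ 2 * r2 * (1+3*h) :=
      le_of_sq_le' (pow_pos hbpos 3).le (by positivity) hb6
    have h6 := mul_le_mul_of_nonneg_left h5 hr2pos.le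
    have e2 : r2 * (2 * r2 * (1+3*h)) = 2 * r2^2 * (1+3*h) := by ring
    rw [e2, hr2] at h6
    linarith only [h6]
  set M : ℝ := r2 * b * (c^2 * L) / 2 with hM_def
  have hPM : |r2*(b^3/3+R) - 4/3 - M| ≤ 6*h := by
    have hW1 : W ≤ (c^2 * L)/2 + c^2/4 := by rw [hWval]; linarith only [hbG2]
    have hW2 : (c^2 * L)/2 ≤ W := by rw [hWval]; linarith only [hbG1]
    have hRW1 : R ≤ b * ((c^2 * L)/2 + c^2/4) :=
      le_trans hRub (mul_le_mul_of_nonneg_left hW1 hbpos.le)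
    have hRW2 : b * ((c^2 * L)/2) - c^2*b/4 ≤ R := by
      have q := mul_le_mul_of_nonneg_left hW2 hbpos.le
      linarith only [q, hRlb]
    have hrb : r2 * b ≤ 12/5 :=
      le_trans (mul_le_mul_of_nonneg_left hbub hr2pos.le)
        (by linarith only [hr2ub])
    have hcb : (r2 * b) * (c^2/4) ≤ 2*h := by
      have q1 : (r2*b) * (c^2/4) ≤ (12/5) * (c^2/4) :=
        mul_le_mul_of_nonneg_right hrb (by positivity)
      have q2 : (12/5) * (c^2/4) ≤ (12/5) * ((2*h)/4) := by linarith only [hc2ub]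
      linarith only [q1, q2, h0]
    have m1 := mul_le_mul_of_nonneg_left hRW1 hr2pos.le
    have m2 := mul_le_mul_of_nonneg_left hRW2 hr2pos.le
    rw [abs_le]
    constructor
    · linarith only [m2, hb3lb, hcb, hM_def, h0]
    · linarith only [m1, hb3ub, hcb, hM_def, h0]
  have hMt : |M - h*t| ≤ 6*h := by
    set β : ℝ := r2 * b / 2 with hβ_def
    have hβpos : 0 < β := by positivity
    have hβ1 : 1 ≤ β := by
      have q := mul_le_mul_of_nonneg_left hblb hr2pos.le
      have e : r2 * r2 = 2 := by rw [show r2*r2 = r2^2 by ring, hr2]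
      rw [hβ_def]; linarith only [q, e]
    have hβ2 : β ≤ 1 + h/2 := by
      apply le_of_sq_le' hβpos.le (by linarith only [h0])
      have e : β^2 = r2^2 * b^2 / 4 := by rw [hβ_def]; ring
      rw [e, hr2, hb2]
      linarith only [sq_nonneg h, hsub]
    have hMeq : M = β * (c^2 * L) := by rw [hM_def, hβ_def]; ring
    have hc2Lpos : 0 ≤ c^2 * L := by positivity
    have hh2t : h^2 * t ≤ h := by
      have e := mul_le_mul_of_nonneg_left hth h0.le
      have e2 : h * (t*h) = h^2 * t := by ring
      rw [e2, mul_one] at e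
      linarith only [e]
    rw [hMeq, abs_le]
    constructor
    · have l1 : c^2 * (t/2) ≤ c^2 * L := mul_le_mul_of_nonneg_left hLlb (sq_nonneg c)
      have l2 : c^2 * L ≤ β * (c^2 * L) := le_mul_of_one_le_left hc2Lpos hβ1
      have l3 : (2*h - 2*h^2) * (t/2) ≤ c^2 * (t/2) :=
        mul_le_mul_of_nonneg_right hc2lb (by linarith only [htpos])
      linarith only [l1, l2, l3, hh2t, h0]
    · have u1 : c^2 * L ≤ c^2 * (t/2 + 2) := mul_le_mul_of_nonneg_left hLub (sq_nonneg c)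
      have u2 : β * (c^2 * L) ≤ β * (c^2 * (t/2+2)) :=
        mul_le_mul_of_nonneg_left u1 hβpos.le
      have u3 : β * c^2 ≤ (1+h/2)*(2*h) :=
        mul_le_mul hβ2 hc2ub (sq_nonneg c) (by linarith only [h0])
      have u5 : (β*c^2) * (t/2) ≤ ((1+h/2)*(2*h)) * (t/2) :=
        mul_le_mul_of_nonneg_right u3 (by linarith only [htpos])
      have u8 : 2 * (β * c^2) ≤ 2 * ((1+h/2)*(2*h)) := by linarith only [u3]
      have hsq : h^2 ≤ h/4 := by
        have q := mul_le_mul_of_nonneg_right h14 h0.le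
        linarith only [q]
      linarith only [u2, u5, u8, hh2t, hsq, h0]
  calc |r2*(b^3/3+R) - 4/3 - h*t|
      ≤ |r2*(b^3/3+R) - 4/3 - M| + |M - h*t| := by
        have e : r2*(b^3/3+R) - 4/3 - h*t
            = (r2*(b^3/3+R) - 4/3 - M) + (M - h*t) := by ring
        rw [e]
        exact abs_add_le _ _
    _ ≤ 6*h + 6*h := add_le_add hPM hMt
    _ = 12*h := by ring

set_option maxHeartbeats 1000000 in
lemma key_est (h : ℝ) (h0 : 0 < h) (h14 : h ≤ 1/4) :
    |ellI 0 h - 4/3 + h * Real.log h| ≤ 12*h := by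
  set s : ℝ := Real.sqrt (1 + 4*h) with hs_def
  have hs2 : s^2 = 1 + 4*h := Real.sq_sqrt (by linarith)
  have hs1 : 1 < s := by nlinarith [Real.sqrt_nonneg (1+4*h), hs2]
  set b : ℝ := xmax h with hb_def
  have hb2 : b^2 = 1 + s := Real.sq_sqrt (by linarith)
  have hbpos : 0 < b := Real.sqrt_pos.2 (by linarith)
  set c : ℝ := Real.sqrt (s - 1) with hc_def
  have hc2 : c^2 = s - 1 := Real.sq_sqrt (by linarith)
  have hcpos : 0 < c := Real.sqrt_pos.2 (by linarith)
  have hsq : h^2 ≤ h/4 := by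
    have q := mul_le_mul_of_nonneg_right h14 h0.le
    linarith only [q]
  have hsub : s ≤ 1 + 2*h := by
    rw [hs_def]
    have q : Real.sqrt (1+4*h) ≤ Real.sqrt ((1+2*h)^2) :=
      Real.sqrt_le_sqrt (by linarith only [sq_nonneg h])
    rwa [Real.sqrt_sq (by linarith only [h0])] at q
  have hslb : 1 + 2*h - 2*h^2 ≤ s := by
    rw [hs_def]
    have p : 0 ≤ h^3*(2-h) := mul_nonneg (by positivity) (by linarith only [h14])
    have q : Real.sqrt ((1+2*h-2*h^2)^2) ≤ Real.sqrt (1+4*h) :=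
      Real.sqrt_le_sqrt (by linarith only [p])
    rwa [Real.sqrt_sq (by linarith only [hsq, h0])] at q
  have hr2 : (Real.sqrt 2)^2 = 2 := Real.sq_sqrt (by norm_num)
  have hr2pos : 0 < Real.sqrt 2 := Real.sqrt_pos.2 (by norm_num)
  have hfact : ∀ x : ℝ, 2*h + x^2 - x^4/2 = (b^2 - x^2) * (x^2 + c^2) / 2 := by
    intro x
    rw [hb2, hc2]
    linear_combination (-1/2) * hs2
  have hcont : Continuous (fun x : ℝ => Real.sqrt (2*h + x^2 - x^4/2)) := by fun_prop
  -- evenness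
  have e1 : ellI 0 h = 2 * ∫ x in (0:ℝ)..b, Real.sqrt (2*h + x^2 - x^4/2) := by
    show (∫ x in (-b)..b, x^(0:ℕ) * Real.sqrt (2*h + x^2 - x^4/2)) = _
    simp only [pow_zero, one_mul]
    rw [← intervalIntegral.integral_add_adjacent_intervals (a := -b) (b := 0) (c := b)
      (hcont.intervalIntegrable _ _) (hcont.intervalIntegrable _ _)]
    have hneg : ∫ x in (-b)..(0:ℝ), Real.sqrt (2*h + x^2 - x^4/2)
        = ∫ x in (0:ℝ)..b, Real.sqrt (2*h + x^2 - x^4/2) := by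
      have hcn := intervalIntegral.integral_comp_neg
        (a := 0) (b := b) (fun x => Real.sqrt (2*h + x^2 - x^4/2))
      simp only [neg_zero] at hcn
      rw [← hcn]
      apply intervalIntegral.integral_congr
      intro x _
      simp only
      congr 1
      ring
    rw [hneg]; ring
  -- split
  set R : ℝ := ∫ x in (0:ℝ)..b, (Real.sqrt (x^2 + c^2) - x) * Real.sqrt (b^2 - x^2)
    with hR_def
  have int1 : IntervalIntegrable (fun x : ℝ => x * Real.sqrt (b^2 - x^2))
      MeasureTheory.volume 0 b := by apply Continuous.intervalIntegrable; fun_prop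
  have int2 : IntervalIntegrable
      (fun x : ℝ => (Real.sqrt (x^2 + c^2) - x) * Real.sqrt (b^2 - x^2))
      MeasureTheory.volume 0 b := by apply Continuous.intervalIntegrable; fun_prop
  have e2 : ∫ x in (0:ℝ)..b, Real.sqrt (2*h + x^2 - x^4/2)
      = (b^3/3 + R) / Real.sqrt 2 := by
    have step1 : ∫ x in (0:ℝ)..b, Real.sqrt (2*h + x^2 - x^4/2)
        = ∫ x in (0:ℝ)..b,
            (x * Real.sqrt (b^2 - x^2)
              + (Real.sqrt (x^2 + c^2) - x) * Real.sqrt (b^2 - x^2)) / Real.sqrt 2 := by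
      apply intervalIntegral.integral_congr
      intro x hx
      rw [uIcc_of_le hbpos.le] at hx
      have q := mul_self_le_mul_self hx.1 hx.2
      have h1 : 0 ≤ b^2 - x^2 := by
        have e : x*x = x^2 := by ring
        have e2 : b*b = b^2 := by ring
        linarith only [q, e, e2]
      simp only
      rw [hfact x, Real.sqrt_div (by positivity), Real.sqrt_mul h1]
      congr 1
      ring
    rw [step1, intervalIntegral.integral_div,
      intervalIntegral.integral_add int1 int2, auxL1 hbpos.le]
  -- total formula
  have h22 : Real.sqrt 2 * Real.sqrt 2 = 2 := Real.mul_self_sqrt (by norm_num)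
  have etot : ellI 0 h = Real.sqrt 2 * (b^3/3 + R) := by
    rw [e1, e2]
    field_simp
    linear_combination (-b^3 - 3*R) * hr2
  -- W and its value
  set W : ℝ := ∫ x in (0:ℝ)..b, (Real.sqrt (x^2 + c^2) - x) with hW_def
  have hWval : W = (b * Real.sqrt (b^2 + c^2) - b^2
      + c^2 * (Real.log (b + Real.sqrt (b^2 + c^2)) - Real.log c)) / 2 := auxL2 hcpos
  have hRub : R ≤ b * W := myRub hbpos hcpos
  have hRlb : b * W - c^2 * b / 4 ≤ R := myRlb hbpos hcpos
  -- G facts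
  have hG2 : (Real.sqrt (b^2 + c^2))^2 = b^2 + c^2 := Real.sq_sqrt (by positivity)
  have hGb : b ≤ Real.sqrt (b^2 + c^2) := by
    have q : Real.sqrt (b^2) ≤ Real.sqrt (b^2 + c^2) :=
      Real.sqrt_le_sqrt (by linarith only [sq_nonneg c])
    rwa [Real.sqrt_sq hbpos.le] at q
  have hGbc : Real.sqrt (b^2 + c^2) ≤ b + c := by
    have q : Real.sqrt (b^2 + c^2) ≤ Real.sqrt ((b+c)^2) :=
      Real.sqrt_le_sqrt (by linarith only [mul_pos hbpos hcpos])
    rwa [Real.sqrt_sq (by positivity)] at q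
  -- numeric bounds for q-range
  have hbub : b ≤ 8/5 :=
    le_of_sq_le' hbpos.le (by norm_num) (by rw [hb2]; linarith only [hsub, h14])
  have hblb1 : 1 ≤ b :=
    le_of_sq_le' (by norm_num) hbpos.le (by rw [hb2]; linarith only [hs1])
  have hcub : c ≤ 1 :=
    le_of_sq_le' hcpos.le (by norm_num) (by rw [hc2]; linarith only [hsub, h14])
  have hq1 : 2 ≤ b + Real.sqrt (b^2 + c^2) := by linarith only [hblb1, hGb]
  have hq2 : b + Real.sqrt (b^2 + c^2) ≤ 5 := by linarith only [hbub, hGbc, hcub]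
  have hc2lbh : h ≤ c^2 := by rw [hc2]; linarith only [hslb, hsq, h0]
  have hc2ubh : c^2 ≤ 2*h := by rw [hc2]; linarith only [hsub]
  have hL := logL_bounds h0 h14 hcpos hc2lbh hc2ubh hq1 hq2
  -- t facts
  have htpos : 0 < -Real.log h := by
    have := Real.log_neg h0 (by linarith)
    linarith only [this]
  have hth : (-Real.log h) * h ≤ 1 := by
    have q1 : Real.log h⁻¹ ≤ h⁻¹ - 1 := Real.log_le_sub_one_of_pos (by positivity)
    rw [Real.log_inv] at q1
    have q3 := mul_le_mul_of_nonneg_right q1 h0.le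
    rw [sub_mul, inv_mul_cancel₀ h0.ne'] at q3
    linarith only [q3, h0]
  have harith := arith_all h0 h14 hs2 hs1 hsub hslb hb2 hbpos hc2 hcpos hr2 hr2pos
    hG2 hGb hWval hRub hRlb hL.1 hL.2 htpos hth
  have efin : ellI 0 h - 4/3 + h * Real.log h
      = Real.sqrt 2 * (b^3/3 + R) - 4/3 - h * (-Real.log h) := by
    rw [etot]; ring
  rw [efin]
  exact harith

theorem ellI0_log_asymptotics :
    Tendsto (fun h => (ellI 0 h - 4/3) / (h * Real.log h))
      (nhdsWithin 0 (Ioi 0)) (nhds (-1)) := by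
  rw [← tendsto_sub_nhds_zero_iff]
  apply squeeze_zero_norm' (a := fun h : ℝ => 12 * (-Real.log h)⁻¹)
  · filter_upwards [Ioo_mem_nhdsGT (show (0:ℝ) < 1/8 by norm_num)] with x hx
    obtain ⟨hx0, hx8⟩ := hx
    have h14 : x ≤ 1/4 := by linarith
    have hlog : Real.log x < 0 := Real.log_neg hx0 (by linarith)
    have hkey := key_est x hx0 h14
    have hne : x * Real.log x < 0 := mul_neg_of_pos_of_neg hx0 hlog
    have e : (ellI 0 x - 4/3)/(x*Real.log x) - (-1)
        = (ellI 0 x - 4/3 + x*Real.log x)/(x*Real.log x) := by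
      have hl : x * Real.log x ≠ 0 := hne.ne
      have hl' : Real.log x ≠ 0 := hlog.ne
      field_simp
      ring
    rw [Real.norm_eq_abs, e, abs_div, abs_of_neg hne]
    rw [div_le_iff₀ (by linarith : (0:ℝ) < -(x*Real.log x))]
    calc |ellI 0 x - 4/3 + x*Real.log x| ≤ 12*x := hkey
      _ = 12 * (-Real.log x)⁻¹ * -(x*Real.log x) := by
          have hl : Real.log x ≠ 0 := hlog.ne
          field_simp
  · have h1 : Tendsto (fun x : ℝ => -Real.log x) (nhdsWithin 0 (Ioi 0)) atTop :=
      tendsto_neg_atBot_atTop.comp Real.tendsto_log_nhdsGT_zero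
    have h2 := tendsto_inv_atTop_zero.comp h1
    have h3 := h2.const_mul (12:ℝ)
    simpa using h3
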